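/- Let n ≥ 3 and let H(X,Y) := i·tr(η(XY + YX)) on su(n). Then H is diagonal with respect to the orthonormal basis B, i.e. H(X,Y) = 0 for distinct X, Y ∈ B; moreover H(T_p,T_p) = 2 for p < n−1, H(T_{n−1},T_{n−1}) = −2(n−2), H(E^r(k,l),E^r(k,l)) = H(E^c(k,l),E^c(k,l)) = 2 for l < n, and H(E^r(k,n),E^r(k,n)) = H(E^c(k,n),E^c(k,n)) = −(n−2). -/

import Mathlib

open Matrix

/-- The square complex matrices of size `n`. -/
abbrev Mat (n : ℕ) := Matrix (Fin n) (Fin n) ℂ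

/-- `T_k = (i/√(k(k+1)))·diag(1,…,1,−k,0,…,0)`, with `k` ones (positions `0,…,k−1` in
0-based indexing, i.e. positions `1,…,k` in the 1-based indexing of the paper) followed by
`−k`. -/
noncomputable def Tmat (n k : ℕ) : Mat n :=
  (Complex.I / (Real.sqrt (k * (k + 1)) : ℂ)) •
    Matrix.diagonal (fun j : Fin n => if (j : ℕ) < k then 1 else if (j : ℕ) = k then -(k : ℂ) else 0)

/-- `E^r(k,l)`: the matrix with `(p,q)` entry `(1/√2)(δ_{kp}δ_{lq} − δ_{kq}δ_{lp})`. -/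
noncomputable def Ermat (n : ℕ) (k l : Fin n) : Mat n :=
  ((Real.sqrt 2 : ℂ))⁻¹ • (Matrix.single k l 1 - Matrix.single l k 1)

/-- `E^c(k,l)`: the matrix with `(p,q)` entry `(i/√2)(δ_{kp}δ_{lq} + δ_{kq}δ_{lp})`. -/
noncomputable def Ecmat (n : ℕ) (k l : Fin n) : Mat n :=
  (Complex.I / (Real.sqrt 2 : ℂ)) • (Matrix.single k l 1 + Matrix.single l k 1)

/-- The index set for the basis `B` of `su(n)`: `n−1` indices for the `T_k` and two copies
of the set of pairs `k < l` for the `E^r(k,l)` and `E^c(k,l)`. -/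
abbrev BIdx (n : ℕ) :=
  Fin (n - 1) ⊕ ({p : Fin n × Fin n // p.1 < p.2} ⊕ {p : Fin n × Fin n // p.1 < p.2})

/-- The family `B = {T_1,…,T_{n−1}} ∪ {E^r(k,l)} ∪ {E^c(k,l)}`. -/
noncomputable def bmat (n : ℕ) : BIdx n → Mat n
  | Sum.inl k => Tmat n (k + 1)
  | Sum.inr (Sum.inl p) => Ermat n p.1.1 p.1.2
  | Sum.inr (Sum.inr p) => Ecmat n p.1.1 p.1.2

/-- `η = i·diag(1,…,1,−(n−1))`. -/
noncomputable def eta (n : ℕ) : Mat n :=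
  Complex.I • Matrix.diagonal (fun j : Fin n => if (j : ℕ) < n - 1 then 1 else -((n : ℂ) - 1))

/-- `H(X,Y) = i·tr(η(XY + YX))`, real-valued on `su(n)`. -/
noncomputable def Hform (n : ℕ) (X Y : Mat n) : ℂ :=
  Complex.I * (eta n * (X * Y + Y * X)).trace

/-- `σ(X,Y,Z) = i(tr(XYZ) + tr(XZY))`, real-valued on `su(n)`. -/
noncomputable def sigmaC (n : ℕ) (X Y Z : Mat n) : ℂ :=
  Complex.I * ((X * Y * Z).trace + (X * Z * Y).trace)

noncomputable def dnat (n j : ℕ) : ℂ := if j < n - 1 then 1 else -((n : ℂ) - 1)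

noncomputable def vT (k j : ℕ) : ℂ := if j < k then 1 else if j = k then -(k : ℂ) else 0

lemma trace_eta_mul (n : ℕ) (M : Mat n) :
    (eta n * M).trace = Complex.I * ∑ j : Fin n, dnat n (j : ℕ) * M j j := by
  unfold eta dnat
  rw [Matrix.smul_mul, Matrix.trace_smul, smul_eq_mul]
  congr 1
  simp only [Matrix.trace, Matrix.diag, Matrix.mul_apply, Matrix.diagonal_apply, ite_mul,
    zero_mul, Finset.sum_ite_eq, Finset.mem_univ, if_true]

lemma Hform_eq (n : ℕ) (X Y : Mat n) :
    Hform n X Y = -∑ j : Fin n, ∑ m : Fin n, (dnat n j + dnat n m) * (X j m * Y m j) := by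
  unfold Hform
  rw [trace_eta_mul, ← mul_assoc, Complex.I_mul_I, neg_one_mul, neg_inj]
  simp only [Matrix.add_apply, Matrix.mul_apply, mul_add, add_mul, Finset.mul_sum,
    Finset.sum_add_distrib]
  congr 1
  rw [Finset.sum_comm]
  refine Finset.sum_congr rfl fun j _ => Finset.sum_congr rfl fun m _ => by ring

lemma Hform_comm (n : ℕ) (X Y : Mat n) : Hform n X Y = Hform n Y X := by
  unfold Hform
  rw [add_comm (X * Y)]

lemma Hform_smul_left (n : ℕ) (a : ℂ) (X Y : Mat n) :
    Hform n (a • X) Y = a * Hform n X Y := by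
  simp only [Hform_eq, Matrix.smul_apply, smul_eq_mul]
  rw [mul_neg, neg_inj, Finset.mul_sum]
  refine Finset.sum_congr rfl fun j _ => ?_
  rw [Finset.mul_sum]
  exact Finset.sum_congr rfl fun m _ => by ring

lemma Hform_smul_right (n : ℕ) (a : ℂ) (X Y : Mat n) :
    Hform n X (a • Y) = a * Hform n X Y := by
  simp only [Hform_eq, Matrix.smul_apply, smul_eq_mul]
  rw [mul_neg, neg_inj, Finset.mul_sum]
  refine Finset.sum_congr rfl fun j _ => ?_
  rw [Finset.mul_sum]
  exact Finset.sum_congr rfl fun m _ => by ring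

lemma Hform_add_right (n : ℕ) (X Y Y' : Mat n) :
    Hform n X (Y + Y') = Hform n X Y + Hform n X Y' := by
  simp only [Hform_eq, Matrix.add_apply, add_mul, mul_add, Finset.sum_add_distrib, neg_add]

lemma Hform_sub_left (n : ℕ) (X X' Y : Mat n) :
    Hform n (X - X') Y = Hform n X Y - Hform n X' Y := by
  simp only [Hform_eq, Matrix.sub_apply, sub_mul, mul_sub, Finset.sum_sub_distrib, neg_sub]
  ring

lemma Hform_sub_right (n : ℕ) (X Y Y' : Mat n) :
    Hform n X (Y - Y') = Hform n X Y - Hform n X Y' := by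
  simp only [Hform_eq, Matrix.sub_apply, sub_mul, mul_sub, Finset.sum_sub_distrib, neg_sub]
  ring

lemma Hform_std (n : ℕ) (k l k' l' : Fin n) (c c' : ℂ) :
    Hform n (Matrix.single k l c) (Matrix.single k' l' c') =
      if l = k' ∧ k = l' then -((dnat n k + dnat n l) * (c * c')) else 0 := by
  rw [Hform_eq]
  simp only [Matrix.single, Matrix.of_apply, mul_ite, ite_mul, mul_zero, zero_mul,
    mul_one]
  simp only [ite_and, Finset.sum_ite_eq, Finset.mem_univ, if_true]
  by_cases h1 : l = k' <;> by_cases h2 : k = l' <;> simp [h1, h2]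

lemma Hform_diag_std (n : ℕ) (v : Fin n → ℂ) (k l : Fin n) (hkl : k ≠ l) (c : ℂ) :
    Hform n (Matrix.diagonal v) (Matrix.single k l c) = 0 := by
  rw [Hform_eq]
  simp only [Matrix.diagonal_apply, Matrix.single, Matrix.of_apply, ite_mul, mul_ite,
    zero_mul, mul_zero]
  simp only [ite_and, Finset.sum_ite_eq, Finset.mem_univ, if_true]
  simp [hkl.symm]

lemma Hform_diag_diag (n : ℕ) (v w : Fin n → ℂ) :
    Hform n (Matrix.diagonal v) (Matrix.diagonal w) =
      -∑ j : Fin n, 2 * dnat n (j : ℕ) * (v j * w j) := by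
  rw [Hform_eq]
  simp only [Matrix.diagonal_apply, ite_mul, mul_ite, zero_mul, mul_zero]
  rw [neg_inj]
  refine Finset.sum_congr rfl fun j _ => ?_
  simp only [Finset.sum_ite_eq', Finset.sum_ite_eq, Finset.mem_univ, if_true]
  ring

lemma key_sum (n p : ℕ) (c a : ℂ) (hpn : p < n) (g : ℕ → ℂ)
    (h1 : ∀ j < p, g j = c) (h2 : g p = a) (h0 : ∀ j, p < j → g j = 0) :
    ∑ j ∈ Finset.range n, g j = p * c + a := by
  rw [← Finset.sum_subset (Finset.range_subset_range.mpr hpn)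
    (fun x _ hx => h0 x (by simpa using Finset.mem_range.not.mp hx))]
  rw [Finset.sum_range_succ, h2]
  congr 1
  rw [Finset.sum_congr rfl fun j hj => h1 j (Finset.mem_range.mp hj), Finset.sum_const,
    Finset.card_range, nsmul_eq_mul]

lemma I_div_mul (a b S : ℂ) : (Complex.I / a) * ((Complex.I / b) * -S) = (a * b)⁻¹ * S := by
  rw [div_eq_mul_inv, div_eq_mul_inv,
    show Complex.I * a⁻¹ * (Complex.I * b⁻¹ * -S) =
      Complex.I * Complex.I * (a⁻¹ * b⁻¹ * -S) by ring, Complex.I_mul_I, mul_inv]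
  ring

lemma Hform_T_T (n p q : ℕ) :
    Hform n (Tmat n p) (Tmat n q) =
      ((Real.sqrt (p * (p + 1)) : ℂ) * (Real.sqrt (q * (q + 1)) : ℂ))⁻¹ *
        ∑ j ∈ Finset.range n, 2 * dnat n j * (vT p j * vT q j) := by
  unfold Tmat vT
  rw [Hform_smul_left, Hform_smul_right, Hform_diag_diag,
    Fin.sum_univ_eq_sum_range (fun j => 2 * dnat n j *
      ((if j < p then 1 else if j = p then -(p:ℂ) else 0) *
       (if j < q then 1 else if j = q then -(q:ℂ) else 0))) n]
  set S := ∑ j ∈ Finset.range n, 2 * dnat n j *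
      ((if j < p then 1 else if j = p then -(p:ℂ) else 0) *
       (if j < q then 1 else if j = q then -(q:ℂ) else 0))
  set cp := (Real.sqrt (p * (p + 1)) : ℂ)
  set cq := (Real.sqrt (q * (q + 1)) : ℂ)
  exact I_div_mul cp cq S

lemma vT_lt {k j : ℕ} (h : j < k) : vT k j = 1 := if_pos h

lemma vT_self (k : ℕ) : vT k k = -(k : ℂ) := by
  unfold vT; rw [if_neg (lt_irrefl k), if_pos rfl]

lemma vT_gt {k j : ℕ} (h : k < j) : vT k j = 0 := by
  unfold vT; rw [if_neg (by omega), if_neg (by omega)]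

lemma dnat_lt {n j : ℕ} (h : j < n - 1) : dnat n j = 1 := if_pos h

lemma dnat_last {n j : ℕ} (h : ¬ j < n - 1) : dnat n j = -((n : ℂ) - 1) := if_neg h

lemma Hform_add_left (n : ℕ) (X X' Y : Mat n) :
    Hform n (X + X') Y = Hform n X Y + Hform n X' Y := by
  simp only [Hform_eq, Matrix.add_apply, add_mul, mul_add, Finset.sum_add_distrib, neg_add]

lemma Hform_T_T_ne (n p q : ℕ) (hp : 1 ≤ p) (hpq : p < q) (hq : q ≤ n - 1) :
    Hform n (Tmat n p) (Tmat n q) = 0 := by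
  rw [Hform_T_T, key_sum n p 2 (-(2 * (p : ℂ))) (by omega) _
    (fun j hj => by rw [dnat_lt (by omega), vT_lt hj, vT_lt (by omega)]; ring)
    (by rw [dnat_lt (by omega), vT_self, vT_lt hpq]; ring)
    (fun j hj => by rw [vT_gt hj]; ring)]
  ring

lemma Hform_T_self_small (n p : ℕ) (hp : 1 ≤ p) (hpn : p < n - 1) :
    Hform n (Tmat n p) (Tmat n p) = 2 := by
  rw [Hform_T_T, key_sum n p 2 (2 * (p : ℂ) ^ 2) (by omega) _
    (fun j hj => by rw [dnat_lt (by omega), vT_lt hj]; ring)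
    (by rw [dnat_lt hpn, vT_self]; ring)
    (fun j hj => by rw [vT_gt hj]; ring)]
  have h1 : (Real.sqrt (p * (p + 1)) : ℂ) * (Real.sqrt (p * (p + 1)) : ℂ)
      = (p : ℂ) * ((p : ℂ) + 1) := by
    rw [← Complex.ofReal_mul, Real.mul_self_sqrt (by positivity)]
    push_cast; ring
  rw [h1]
  have hp0 : (p : ℂ) ≠ 0 := Nat.cast_ne_zero.mpr (by omega)
  have hp1 : (p : ℂ) + 1 ≠ 0 := Nat.cast_add_one_ne_zero p
  field_simp
  ring

lemma Hform_T_last (n : ℕ) (hn : 3 ≤ n) :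
    Hform n (Tmat n (n - 1)) (Tmat n (n - 1)) = -2 * ((n : ℂ) - 2) := by
  have hc : ((n - 1 : ℕ) : ℂ) = (n : ℂ) - 1 := by
    rw [Nat.cast_sub (by omega)]; norm_num
  rw [Hform_T_T, key_sum n (n - 1) 2 (-2 * ((n : ℂ) - 1) ^ 3) (by omega) _
    (fun j hj => by rw [dnat_lt (by omega), vT_lt hj]; ring)
    (by rw [dnat_last (lt_irrefl _), vT_self, hc]; ring)
    (fun j hj => by rw [vT_gt hj]; ring)]
  have hcr : ((n - 1 : ℕ) : ℝ) = (n : ℝ) - 1 := by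
    rw [Nat.cast_sub (by omega)]; norm_num
  have h1 : (Real.sqrt ((n - 1 : ℕ) * ((n - 1 : ℕ) + 1)) : ℂ)
      * (Real.sqrt ((n - 1 : ℕ) * ((n - 1 : ℕ) + 1)) : ℂ)
      = ((n : ℂ) - 1) * (n : ℂ) := by
    rw [← Complex.ofReal_mul, Real.mul_self_sqrt (by positivity)]
    push_cast [hcr]; ring
  rw [h1, hc]
  have hn0 : (n : ℂ) ≠ 0 := Nat.cast_ne_zero.mpr (by omega)
  have hn1 : (n : ℂ) - 1 ≠ 0 := by
    intro h
    have : ((n - 1 : ℕ) : ℂ) = 0 := by rw [hc, h]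
    have := Nat.cast_eq_zero.mp this
    omega
  field_simp
  ring

lemma sqrt2_sq : ((Real.sqrt 2 : ℝ) : ℂ) * ((Real.sqrt 2 : ℝ) : ℂ) = 2 := by
  rw [← Complex.ofReal_mul, Real.mul_self_sqrt (by norm_num)]
  norm_num

lemma sqrt2_ne : ((Real.sqrt 2 : ℝ) : ℂ) ≠ 0 := by
  intro h
  have := sqrt2_sq
  rw [h] at this
  simp at this

lemma Hform_T_Er (n p : ℕ) (k l : Fin n) (hkl : k ≠ l) :
    Hform n (Tmat n p) (Ermat n k l) = 0 := by
  unfold Tmat Ermat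
  rw [Hform_smul_left, Hform_smul_right, Hform_sub_right,
    Hform_diag_std n _ k l hkl, Hform_diag_std n _ l k hkl.symm]
  ring

lemma Hform_T_Ec (n p : ℕ) (k l : Fin n) (hkl : k ≠ l) :
    Hform n (Tmat n p) (Ecmat n k l) = 0 := by
  unfold Tmat Ecmat
  rw [Hform_smul_left, Hform_smul_right, Hform_add_right,
    Hform_diag_std n _ k l hkl, Hform_diag_std n _ l k hkl.symm]
  ring

lemma Hform_Er_Er (n : ℕ) (k l k' l' : Fin n) (hkl : k < l) (hkl' : k' < l') :
    Hform n (Ermat n k l) (Ermat n k' l') =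
      if k = k' ∧ l = l' then dnat n ↑k + dnat n ↑l else 0 := by
  unfold Ermat
  rw [Hform_smul_left, Hform_smul_right, Hform_sub_left, Hform_sub_right, Hform_sub_right,
    Hform_std, Hform_std, Hform_std, Hform_std]
  have c1 : ¬(l = k' ∧ k = l') := by rintro ⟨rfl, rfl⟩; exact absurd hkl' (lt_asymm hkl)
  have c4 : ¬(k = l' ∧ l = k') := by rintro ⟨rfl, rfl⟩; exact absurd hkl' (lt_asymm hkl)
  rw [if_neg c1, if_neg c4]
  by_cases h : k = k' ∧ l = l'
  · obtain ⟨rfl, rfl⟩ := h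
    rw [if_pos ⟨rfl, rfl⟩, if_pos ⟨rfl, rfl⟩, if_pos ⟨rfl, rfl⟩]
    field_simp [sqrt2_ne]
    linear_combination (-(dnat n ↑k + dnat n ↑l)) * sqrt2_sq
  · rw [if_neg h, if_neg (fun hx => h ⟨hx.2, hx.1⟩), if_neg h]
    ring

lemma Hform_Ec_Ec (n : ℕ) (k l k' l' : Fin n) (hkl : k < l) (hkl' : k' < l') :
    Hform n (Ecmat n k l) (Ecmat n k' l') =
      if k = k' ∧ l = l' then dnat n ↑k + dnat n ↑l else 0 := by
  unfold Ecmat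
  rw [Hform_smul_left, Hform_smul_right, Hform_add_left, Hform_add_right, Hform_add_right,
    Hform_std, Hform_std, Hform_std, Hform_std]
  have c1 : ¬(l = k' ∧ k = l') := by rintro ⟨rfl, rfl⟩; exact absurd hkl' (lt_asymm hkl)
  have c4 : ¬(k = l' ∧ l = k') := by rintro ⟨rfl, rfl⟩; exact absurd hkl' (lt_asymm hkl)
  rw [if_neg c1, if_neg c4]
  by_cases h : k = k' ∧ l = l'
  · obtain ⟨rfl, rfl⟩ := h
    rw [if_pos ⟨rfl, rfl⟩, if_pos ⟨rfl, rfl⟩, if_pos ⟨rfl, rfl⟩]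
    field_simp [sqrt2_ne]
    linear_combination (-2 * (dnat n ↑k + dnat n ↑l)) * Complex.I_mul_I +
      (-(dnat n ↑k + dnat n ↑l)) * sqrt2_sq
  · rw [if_neg h, if_neg (fun hx => h ⟨hx.2, hx.1⟩), if_neg h]
    ring

lemma Hform_Er_Ec (n : ℕ) (k l k' l' : Fin n) (hkl : k < l) (hkl' : k' < l') :
    Hform n (Ermat n k l) (Ecmat n k' l') = 0 := by
  unfold Ermat Ecmat
  rw [Hform_smul_left, Hform_smul_right, Hform_sub_left, Hform_add_right, Hform_add_right,
    Hform_std, Hform_std, Hform_std, Hform_std]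
  have c1 : ¬(l = k' ∧ k = l') := by rintro ⟨rfl, rfl⟩; exact absurd hkl' (lt_asymm hkl)
  have c4 : ¬(k = l' ∧ l = k') := by rintro ⟨rfl, rfl⟩; exact absurd hkl' (lt_asymm hkl)
  rw [if_neg c1, if_neg c4]
  by_cases h : k = k' ∧ l = l'
  · obtain ⟨rfl, rfl⟩ := h
    rw [if_pos ⟨rfl, rfl⟩, if_pos ⟨rfl, rfl⟩]
    ring
  · rw [if_neg h, if_neg (fun hx => h ⟨hx.2, hx.1⟩)]
    ring

/-- `H(X,Y) = i·tr(η(XY+YX))` is diagonal with respect to the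
orthonormal basis `B`, with the stated diagonal values.  (In the 0-based indexing used
here, the paper's condition `l < n` reads `(l : ℕ) < n − 1`, and `l = n` reads
`(l : ℕ) = n − 1`.) -/

theorem Hform_diagonal_wrt_basis (n : ℕ) (hn : 3 ≤ n) :
    (∀ X ∈ Set.range (bmat n), ∀ Y ∈ Set.range (bmat n), X ≠ Y → Hform n X Y = 0) ∧
    (∀ p : ℕ, 1 ≤ p → p < n - 1 → Hform n (Tmat n p) (Tmat n p) = 2) ∧
    Hform n (Tmat n (n - 1)) (Tmat n (n - 1)) = -2 * ((n : ℂ) - 2) ∧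
    (∀ k l : Fin n, k < l → (l : ℕ) < n - 1 →
      Hform n (Ermat n k l) (Ermat n k l) = 2 ∧ Hform n (Ecmat n k l) (Ecmat n k l) = 2) ∧
    (∀ k l : Fin n, k < l → (l : ℕ) = n - 1 →
      Hform n (Ermat n k l) (Ermat n k l) = -((n : ℂ) - 2) ∧
      Hform n (Ecmat n k l) (Ecmat n k l) = -((n : ℂ) - 2)) := by
  refine ⟨?_, ?_, ?_, ?_, ?_⟩
  · rintro X ⟨i, rfl⟩ Y ⟨j, rfl⟩ hne
    obtain k | p | p := i <;> obtain k' | q | q := j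
    · simp only [bmat] at hne ⊢
      rcases lt_trichotomy (k : ℕ) (k' : ℕ) with h | h | h
      · exact Hform_T_T_ne n (k + 1) (k' + 1) (by omega) (by omega)
          (by have := k'.isLt; omega)
      · exact absurd (by rw [Fin.ext h]) hne
      · rw [Hform_comm]
        exact Hform_T_T_ne n (k' + 1) (k + 1) (by omega) (by omega)
          (by have := k.isLt; omega)
    · simp only [bmat]
      exact Hform_T_Er n (k + 1) _ _ (ne_of_lt q.2)
    · simp only [bmat]
      exact Hform_T_Ec n (k + 1) _ _ (ne_of_lt q.2)
    · simp only [bmat]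
      rw [Hform_comm]
      exact Hform_T_Er n (k' + 1) _ _ (ne_of_lt p.2)
    · simp only [bmat] at hne ⊢
      by_cases hpq : p = q
      · exact absurd (by rw [hpq]) hne
      · rw [Hform_Er_Er n _ _ _ _ p.2 q.2,
          if_neg (fun hx => hpq (Subtype.ext (Prod.ext hx.1 hx.2)))]
    · simp only [bmat]
      exact Hform_Er_Ec n _ _ _ _ p.2 q.2
    · simp only [bmat]
      rw [Hform_comm]
      exact Hform_T_Ec n (k' + 1) _ _ (ne_of_lt p.2)
    · simp only [bmat]
      rw [Hform_comm]
      exact Hform_Er_Ec n _ _ _ _ q.2 p.2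
    · simp only [bmat] at hne ⊢
      by_cases hpq : p = q
      · exact absurd (by rw [hpq]) hne
      · rw [Hform_Ec_Ec n _ _ _ _ p.2 q.2,
          if_neg (fun hx => hpq (Subtype.ext (Prod.ext hx.1 hx.2)))]
  · exact fun p hp hpn => Hform_T_self_small n p hp hpn
  · exact Hform_T_last n hn
  · intro k l hkl hl
    have hk : (k : ℕ) < n - 1 := lt_trans hkl hl
    constructor
    · rw [Hform_Er_Er n k l k l hkl hkl, if_pos ⟨rfl, rfl⟩, dnat_lt hk, dnat_lt hl]
      norm_num
    · rw [Hform_Ec_Ec n k l k l hkl hkl, if_pos ⟨rfl, rfl⟩, dnat_lt hk, dnat_lt hl]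
      norm_num
  · intro k l hkl hl
    have hk : (k : ℕ) < n - 1 := by
      have : (k : ℕ) < (l : ℕ) := hkl
      omega
    have hl' : ¬ (l : ℕ) < n - 1 := by omega
    constructor
    · rw [Hform_Er_Er n k l k l hkl hkl, if_pos ⟨rfl, rfl⟩, dnat_lt hk, dnat_last hl']
      ring
    · rw [Hform_Ec_Ec n k l k l hkl hkl, if_pos ⟨rfl, rfl⟩, dnat_lt hk, dnat_last hl']
      ring
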